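/- Let u, v : Ω → ℝ be smooth with v₁ vanishing nowhere on Ω. If u₂·v₁ − u₁·v₂ = v₁·v₂ and u₄·v₁ − u₁·v₄ = v₁·v₃ hold identically on Ω, then ∂₃(v₂/v₁) = ∂₂(v₄/v₁) on Ω. -/

import Mathlib

/-- Partial derivative of `F : ℝ⁴ → ℝ` in the `i`-th coordinate direction. -/
noncomputable def pd (i : Fin 4) (F : (Fin 4 → ℝ) → ℝ) : (Fin 4 → ℝ) → ℝ :=
  fun x => fderiv ℝ F x (Pi.single i 1)

section helpers

variable {f g : (Fin 4 → ℝ) → ℝ} {x : Fin 4 → ℝ} {i : Fin 4} {Ω : Set (Fin 4 → ℝ)}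

lemma pd_congr (hΩ : IsOpen Ω) (hx : x ∈ Ω) (h : ∀ y ∈ Ω, f y = g y) :
    pd i f x = pd i g x := by
  have h' : f =ᶠ[nhds x] g := Filter.eventuallyEq_of_mem (hΩ.mem_nhds hx) h
  unfold pd
  rw [h'.fderiv_eq]

lemma pd_const (c : ℝ) : pd i (fun _ => c) x = 0 := by
  unfold pd; rw [fderiv_fun_const]; simp

lemma pd_mul (hf : DifferentiableAt ℝ f x) (hg : DifferentiableAt ℝ g x) :
    pd i (fun y => f y * g y) x = pd i f x * g x + f x * pd i g x := by
  unfold pd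
  rw [fderiv_fun_mul hf hg]
  simp only [ContinuousLinearMap.add_apply, ContinuousLinearMap.smul_apply, smul_eq_mul]
  ring

lemma pd_div (hf : DifferentiableAt ℝ f x) (hg : DifferentiableAt ℝ g x)
    (hgx : g x ≠ 0) :
    pd i (fun y => f y / g y) x
      = (pd i f x * g x - f x * pd i g x) / g x ^ 2 := by
  have hinv : HasFDerivAt (fun y => (g y)⁻¹) ((-(g x ^ 2)⁻¹) • fderiv ℝ g x) x :=
    (hasDerivAt_inv hgx).comp_hasFDerivAt x hg.hasFDerivAt
  have hmul : pd i (fun y => f y * (g y)⁻¹) x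
      = pd i f x * (g x)⁻¹ + f x * pd i (fun y => (g y)⁻¹) x :=
    pd_mul hf hinv.differentiableAt
  have hpinv : pd i (fun y => (g y)⁻¹) x = (-(g x ^ 2)⁻¹) * pd i g x := by
    unfold pd
    rw [hinv.fderiv]
    simp
  have : (fun y => f y / g y) = fun y => f y * (g y)⁻¹ := by
    funext y; rw [div_eq_mul_inv]
  rw [this, hmul, hpinv]
  field_simp
  ring

lemma contDiffOn_pd (hΩ : IsOpen Ω) (hf : ContDiffOn ℝ (⊤ : ℕ∞) f Ω) (i : Fin 4) :
    ContDiffOn ℝ (⊤ : ℕ∞) (pd i f) Ω := by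
  have h1 : ContDiffOn ℝ (⊤ : ℕ∞) (fderiv ℝ f) Ω :=
    hf.fderiv_of_isOpen hΩ (by simp)
  exact h1.clm_apply contDiffOn_const

lemma diffAt_of (hΩ : IsOpen Ω) (hf : ContDiffOn ℝ (⊤ : ℕ∞) f Ω) (hx : x ∈ Ω) :
    DifferentiableAt ℝ f x :=
  (hf.contDiffAt (hΩ.mem_nhds hx)).differentiableAt (by simp)

lemma pd_comm (hΩ : IsOpen Ω) (hf : ContDiffOn ℝ (⊤ : ℕ∞) f Ω) (hx : x ∈ Ω)
    (i j : Fin 4) : pd i (pd j f) x = pd j (pd i f) x := by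
  have hct : ContDiffAt ℝ (⊤ : ℕ∞) f x := hf.contDiffAt (hΩ.mem_nhds hx)
  have h2 : (2 : WithTop ℕ∞) ≤ ((⊤ : ℕ∞) : WithTop ℕ∞) :=
    by decide
  have hsymm : IsSymmSndFDerivAt ℝ f x := hct.isSymmSndFDerivAt (by simpa using h2)
  have h1 : ContDiffOn ℝ (⊤ : ℕ∞) (fderiv ℝ f) Ω := hf.fderiv_of_isOpen hΩ (by simp)
  have hdf : DifferentiableAt ℝ (fderiv ℝ f) x :=
    (h1.contDiffAt (hΩ.mem_nhds hx)).differentiableAt (by simp)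
  have key : ∀ w : Fin 4 → ℝ,
      fderiv ℝ (fun y => fderiv ℝ f y w) x = (fderiv ℝ (fderiv ℝ f) x).flip w := by
    intro w
    rw [fderiv_clm_apply hdf (differentiableAt_const w)]
    simp
  show fderiv ℝ (fun y => fderiv ℝ f y (Pi.single j 1)) x (Pi.single i 1)
      = fderiv ℝ (fun y => fderiv ℝ f y (Pi.single i 1)) x (Pi.single j 1)
  rw [key, key]
  simpa using hsymm.eq (Pi.single i 1) (Pi.single j 1)

lemma pd_expand {a b c d e : (Fin 4 → ℝ) → ℝ} (k : Fin 4)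
    (ha : DifferentiableAt ℝ a x) (hb : DifferentiableAt ℝ b x)
    (hc : DifferentiableAt ℝ c x) (hd : DifferentiableAt ℝ d x)
    (he : DifferentiableAt ℝ e x) :
    pd k (fun y => a y * b y - c y * d y - b y * e y) x
      = pd k a x * b x + a x * pd k b x - (pd k c x * d x + c x * pd k d x)
        - (pd k b x * e x + b x * pd k e x) := by
  unfold pd
  rw [fderiv_fun_sub (f := fun y => a y * b y - c y * d y) (g := fun y => b y * e y)
      ((ha.mul hb).sub (hc.mul hd)) (hb.mul he),
    fderiv_fun_sub (f := fun y => a y * b y) (g := fun y => c y * d y) (ha.mul hb) (hc.mul hd), fderiv_fun_mul ha hb, fderiv_fun_mul hc hd,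
    fderiv_fun_mul hb he]
  simp only [ContinuousLinearMap.sub_apply, ContinuousLinearMap.add_apply,
    ContinuousLinearMap.smul_apply, smul_eq_mul]
  ring

end helpers

/-- Elimination of `u` from the Segre type [211] system `u₂v₁ − u₁v₂ = v₁v₂`,
`u₄v₁ − u₁v₄ = v₁v₃` yields `∂₃(v₂/v₁) = ∂₂(v₄/v₁)`.
Coordinates `x¹,…,x⁴` are indexed by `0,…,3`. -/
theorem statement3 (Ω : Set (Fin 4 → ℝ)) (hΩ : IsOpen Ω)
    (u v : (Fin 4 → ℝ) → ℝ)
    (hu : ContDiffOn ℝ (⊤ : ℕ∞) u Ω) (hv : ContDiffOn ℝ (⊤ : ℕ∞) v Ω)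
    (hv1 : ∀ x ∈ Ω, pd 0 v x ≠ 0)
    (heq1 : ∀ x ∈ Ω, pd 1 u x * pd 0 v x - pd 0 u x * pd 1 v x = pd 0 v x * pd 1 v x)
    (heq2 : ∀ x ∈ Ω, pd 3 u x * pd 0 v x - pd 0 u x * pd 3 v x = pd 0 v x * pd 2 v x) :
    ∀ x ∈ Ω,
      pd 2 (fun y => pd 1 v y / pd 0 v y) x = pd 1 (fun y => pd 3 v y / pd 0 v y) x := by
  intro x hx
  have hdv : ∀ j : Fin 4, DifferentiableAt ℝ (pd j v) x :=
    fun j => diffAt_of hΩ (contDiffOn_pd hΩ hv j) hx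
  have hdu : ∀ j : Fin 4, DifferentiableAt ℝ (pd j u) x :=
    fun j => diffAt_of hΩ (contDiffOn_pd hΩ hu j) hx
  have hv0 : pd 0 v x ≠ 0 := hv1 x hx
  -- zero derivatives of the two identities
  have hF1 : ∀ k : Fin 4,
      pd k (fun y => pd 1 u y * pd 0 v y - pd 0 u y * pd 1 v y - pd 0 v y * pd 1 v y) x
        = 0 := by
    intro k
    rw [pd_congr hΩ hx (g := fun _ => (0 : ℝ)) (fun y hy => by
      have := heq1 y hy; linarith), pd_const]
  have hF2 : ∀ k : Fin 4,
      pd k (fun y => pd 3 u y * pd 0 v y - pd 0 u y * pd 3 v y - pd 0 v y * pd 2 v y) x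
        = 0 := by
    intro k
    rw [pd_congr hΩ hx (g := fun _ => (0 : ℝ)) (fun y hy => by
      have := heq2 y hy; linarith), pd_const]
  have hA := hF1 3
  have hB := hF2 1
  have hC := hF1 0
  have hD := hF2 0
  rw [pd_expand 3 (hdu 1) (hdv 0) (hdu 0) (hdv 1) (hdv 1)] at hA
  rw [pd_expand 1 (hdu 3) (hdv 0) (hdu 0) (hdv 3) (hdv 2)] at hB
  rw [pd_expand 0 (hdu 1) (hdv 0) (hdu 0) (hdv 1) (hdv 1)] at hC
  rw [pd_expand 0 (hdu 3) (hdv 0) (hdu 0) (hdv 3) (hdv 2)] at hD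
  -- canonicalize second derivatives using symmetry
  have svc := pd_comm hΩ hv hx
  have suc := pd_comm hΩ hu hx
  rw [suc 3 1, suc 3 0, svc 3 0, svc 3 1] at hA
  rw [svc 1 0, suc 1 0] at hB
  rw [pd_div (hdv 1) (hdv 0) hv0, pd_div (hdv 3) (hdv 0) hv0]
  rw [svc 2 1, svc 2 0] at *
  rw [svc 1 0]
  rw [div_eq_div_iff (by positivity) (by positivity)]
  have hE1 := heq1 x hx
  have hE2 := heq2 x hx
  linear_combination
    (pd 0 v x ^ 2) * hA - (pd 0 v x ^ 2) * hB + (pd 0 v x * pd 1 v x) * hD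
      - (pd 0 v x * pd 3 v x) * hC
      + (pd 0 (pd 0 v) x * pd 3 v x - pd 0 v x * pd 0 (pd 3 v) x) * hE1
      + (pd 0 v x * pd 0 (pd 1 v) x - pd 0 (pd 0 v) x * pd 1 v x) * hE2
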